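/- The graph G = (r-1)K_k + K_1 (the join of a single vertex with r-1 disjoint copies of K_k), for r ≥ 3 and k ≥ 1, is K_{1,r}-free, has domination number 1, and contains an induced k-colorable subgraph of order (r-1)k; hence the bound α_F(G) ≤ (r-1)k·γ(G) (F the family of graphs with chromatic number at most k) is attained with equality. -/

import Mathlib

open Finset

variable {V : Type*}

/-- A finset is independent in `G` : no two of its vertices are adjacent. -/
def IsIndepFinset (G : SimpleGraph V) (S : Finset V) : Prop :=
  ∀ u ∈ S, ∀ v ∈ S, ¬ G.Adj u v

/-- A finset dominates `G` : every vertex outside it has a neighbour inside it. -/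
def IsDomFinset (G : SimpleGraph V) (D : Finset V) : Prop :=
  ∀ v, v ∉ D → ∃ u ∈ D, G.Adj u v

/-- The independence number of `G`. -/
noncomputable def indepNum [Fintype V] (G : SimpleGraph V) : ℕ :=
  sSup {n | ∃ S : Finset V, IsIndepFinset G S ∧ S.card = n}

/-- The domination number of `G`. -/
noncomputable def domNum [Fintype V] (G : SimpleGraph V) : ℕ :=
  sInf {n | ∃ D : Finset V, IsDomFinset G D ∧ D.card = n}

/-- `G` is `K_{1,r}`-free: no vertex has `r` pairwise nonadjacent neighbours. -/
def K1rFree (G : SimpleGraph V) (r : ℕ) : Prop :=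
  ¬ ∃ (v : V) (A : Finset V), (∀ a ∈ A, G.Adj v a) ∧
      (∀ a ∈ A, ∀ b ∈ A, a ≠ b → ¬ G.Adj a b) ∧ A.card = r

/-- The graph (r-1)K_k + K_1 : one apex vertex (none) joined to r-1 disjoint
copies of K_k. -/
def joinStarClique (r k : ℕ) : SimpleGraph (Option (Fin (r - 1) × Fin k)) where
  Adj x y := x ≠ y ∧ (x = none ∨ y = none ∨ Option.map Prod.fst x = Option.map Prod.fst y)
  symm := by
    constructor
    rintro x y ⟨hne, h⟩
    exact ⟨hne.symm, by tauto⟩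
  loopless := by constructor; rintro x ⟨hne, -⟩; exact hne rfl

/-- The maximum order of an induced subgraph of G with chromatic number at
most k. -/
noncomputable def alphaChrom [Fintype V] (G : SimpleGraph V) (k : ℕ) : ℕ :=
  sSup {n | ∃ X : Finset V, (G.induce (X : Set V)).Colorable k ∧ X.card = n}

/-- For r ≥ 3, k ≥ 1, the graph G = (r-1)K_k + K_1 is K_{1,r}-free, has
domination number 1, and its largest induced k-colorable subgraph has order
(r-1)k = (r-1)·k·γ(G), attaining the bound with equality. -/
theorem stmt19 (r k : ℕ) (hr : 3 ≤ r) (hk : 1 ≤ k) :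
    K1rFree (joinStarClique r k) r ∧
    domNum (joinStarClique r k) = 1 ∧
    alphaChrom (joinStarClique r k) k = (r - 1) * k * domNum (joinStarClique r k) := by

  have hr1 : 0 < r - 1 := by omega
  have hadj_iff : ∀ x y : Option (Fin (r - 1) × Fin k),
      (joinStarClique r k).Adj x y ↔
        x ≠ y ∧ (x = none ∨ y = none ∨ Option.map Prod.fst x = Option.map Prod.fst y) :=
    fun x y => Iff.rfl
  -- Part 1: K_{1,r}-free
  have hfree : K1rFree (joinStarClique r k) r := by
    rintro ⟨v, A, hadj, hnon, hcard⟩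
    match v with
    | none =>
      -- all elements of A are `some`, with pairwise distinct first components
      have hsome : ∀ a ∈ A, a ≠ none := by
        intro a ha h
        have := (hadj_iff none a).mp (hadj a ha)
        exact this.1 h.symm
      have hinj : Set.InjOn (fun a : Option (Fin (r-1) × Fin k) =>
          a.elim (⟨0, hr1⟩ : Fin (r-1)) Prod.fst) A := by
        intro a ha b hb hfe
        by_contra hne
        apply hnon a ha b hb hne
        rw [hadj_iff]
        refine ⟨hne, Or.inr (Or.inr ?_)⟩
        match a, hsome a ha, b, hsome b hb with
        | some p, _, some q, _ =>
          simp only [Option.elim] at hfe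
          simp [hfe]
      have hle : A.card ≤ Fintype.card (Fin (r-1)) :=
        Finset.card_le_card_of_injOn _ (fun _ _ => Finset.mem_univ _) hinj
      simp only [Fintype.card_fin] at hle
      omega
    | some p =>
      -- at most one non-`none` neighbour can appear
      have h1 : (A.erase none).card ≤ 1 := by
        rw [Finset.card_le_one]
        intro a ha b hb
        have hamem := Finset.mem_of_mem_erase ha
        have hbmem := Finset.mem_of_mem_erase hb
        have hane := Finset.ne_of_mem_erase ha
        have hbne := Finset.ne_of_mem_erase hb
        have hfa : Option.map Prod.fst (some p) = Option.map Prod.fst a := by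
          rcases (hadj_iff _ a).mp (hadj a hamem) with ⟨-, h | h | h⟩
          · exact absurd h (by simp)
          · exact absurd h hane
          · exact h
        have hfb : Option.map Prod.fst (some p) = Option.map Prod.fst b := by
          rcases (hadj_iff _ b).mp (hadj b hbmem) with ⟨-, h | h | h⟩
          · exact absurd h (by simp)
          · exact absurd h hbne
          · exact h
        by_contra hne
        exact hnon a hamem b hbmem hne
          ((hadj_iff a b).mpr ⟨hne, Or.inr (Or.inr (hfa ▸ hfb))⟩)
      have h2 : A.card ≤ (A.erase none).card + 1 := by
        calc A.card ≤ (insert none (A.erase none)).card :=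
              Finset.card_le_card (fun x hx => by
                by_cases hx0 : x = none
                · simp [hx0]
                · exact Finset.mem_insert_of_mem (Finset.mem_erase.mpr ⟨hx0, hx⟩))
          _ ≤ (A.erase none).card + 1 := Finset.card_insert_le _ _
      omega
  refine ⟨hfree, ?_⟩
  -- Part 2: domination number is 1
  have hdom1 : (1 : ℕ) ∈ {n | ∃ D : Finset (Option (Fin (r-1) × Fin k)),
      IsDomFinset (joinStarClique r k) D ∧ D.card = n} := by
    refine ⟨{none}, ?_, by simp⟩
    intro v hv
    refine ⟨none, Finset.mem_singleton_self _, ?_⟩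
    rw [hadj_iff]
    exact ⟨fun h => hv (by simp [← h]), Or.inl rfl⟩
  have hdom0 : (0 : ℕ) ∉ {n | ∃ D : Finset (Option (Fin (r-1) × Fin k)),
      IsDomFinset (joinStarClique r k) D ∧ D.card = n} := by
    rintro ⟨D, hD, hc⟩
    rw [Finset.card_eq_zero] at hc
    subst hc
    obtain ⟨u, hu, -⟩ := hD none (by simp)
    simp at hu
  have hdnum : domNum (joinStarClique r k) = 1 := by
    unfold domNum
    refine le_antisymm (Nat.sInf_le hdom1) ?_
    rcases Nat.eq_zero_or_pos (sInf {n | ∃ D : Finset (Option (Fin (r-1) × Fin k)),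
        IsDomFinset (joinStarClique r k) D ∧ D.card = n}) with h | h
    · exact absurd (h ▸ Nat.sInf_mem ⟨1, hdom1⟩) hdom0
    · exact h
  refine ⟨hdnum, ?_⟩
  rw [hdnum, mul_one]
  -- Part 3: alphaChrom = (r-1)*k
  have hcardV : Fintype.card (Option (Fin (r-1) × Fin k)) = (r-1) * k + 1 := by
    simp [Fintype.card_option, Fintype.card_prod]
  -- every member of the set is ≤ (r-1)*k
  have hub : ∀ n ∈ {n | ∃ X : Finset (Option (Fin (r-1) × Fin k)),
      ((joinStarClique r k).induce (X : Set (Option (Fin (r-1) × Fin k)))).Colorable k ∧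
      X.card = n}, n ≤ (r-1) * k := by
    rintro n ⟨X, hcol, hc⟩
    by_contra hgt
    push_neg at hgt
    have hXcard : X.card = (r-1) * k + 1 := by
      have := Finset.card_le_univ X
      rw [hcardV] at this
      omega
    have hXuniv : X = Finset.univ := Finset.eq_univ_of_card _ (by rw [hXcard, ← hcardV])
    obtain ⟨C⟩ := hcol
    -- build a (k+1)-clique inside X : none plus the 0-th copy of K_k
    have hmem : ∀ v : Option (Fin (r-1) × Fin k), v ∈ (X : Set (Option (Fin (r-1) × Fin k))) := by
      intro v; rw [hXuniv]; simp
    set emb : Option (Fin k) → Option (Fin (r-1) × Fin k) :=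
      fun j => j.map (fun j => (⟨0, hr1⟩, j)) with hemb
    have hinj : Function.Injective (fun j : Option (Fin k) => C ⟨emb j, hmem _⟩) := by
      intro a b hab
      by_contra hne
      have hadjab : (joinStarClique r k).Adj (emb a) (emb b) := by
        rw [hadj_iff]
        constructor
        · intro h
          apply hne
          match a, b with
          | none, none => rfl
          | none, some q => simp [hemb] at h
          | some p, none => simp [hemb] at h
          | some p, some q => simp [hemb] at h; simp [h]
        · match a, b with
          | none, _ => exact Or.inl rfl
          | some p, none => exact Or.inr (Or.inl rfl)
          | some p, some q => exact Or.inr (Or.inr rfl)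
      have hadjab' : ((joinStarClique r k).induce
          (X : Set (Option (Fin (r-1) × Fin k)))).Adj ⟨emb a, hmem _⟩ ⟨emb b, hmem _⟩ := hadjab
      exact C.valid hadjab' hab
    have := Fintype.card_le_of_injective _ hinj
    simp [Fintype.card_option] at this
  have hmemmax : ((r-1) * k) ∈ {n | ∃ X : Finset (Option (Fin (r-1) × Fin k)),
      ((joinStarClique r k).induce (X : Set (Option (Fin (r-1) × Fin k)))).Colorable k ∧
      X.card = n} := by
    refine ⟨(Finset.univ : Finset (Fin (r-1) × Fin k)).image some, ?_, ?_⟩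
    · -- colour by second coordinate
      refine ⟨SimpleGraph.Coloring.mk
        (fun x => x.val.elim (⟨0, hk⟩ : Fin k) Prod.snd) ?_⟩
      rintro ⟨x, hx⟩ ⟨y, hy⟩ hadjxy hcol
      simp only [Finset.coe_image, Set.mem_image] at hx hy
      obtain ⟨p, -, rfl⟩ := hx
      obtain ⟨q, -, rfl⟩ := hy
      have hxy := (hadj_iff _ _).mp hadjxy
      simp only [Function.Embedding.coe_subtype] at hxy
      simp only [Option.elim] at hcol
      rcases hxy with ⟨hne, h | h | h⟩
      · simp at h
      · simp at h
      · simp only [Option.map_some] at h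
        apply hne
        have : p = q := Prod.ext (by simpa using h) hcol
        simp [this]
    · rw [Finset.card_image_of_injective _ (Option.some_injective _)]
      simp
  refine le_antisymm (csSup_le ⟨_, hmemmax⟩ hub) (le_csSup ⟨(r-1)*k, hub⟩ hmemmax)
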